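/- For every positive integer n, ‖V_n^{-1}‖² = (1/(mn)) · Σ_{k=0}^{n−1} ‖C_n^{km}‖², where ‖·‖ denotes the Frobenius norm. -/
import Mathlib


open Matrix Polynomial Finset

noncomputable def frobNorm {α β : Type*} [Fintype α] [Fintype β] (A : Matrix α β ℂ) : ℝ :=
  Real.sqrt ((Aᴴ * A).trace.re)

noncomputable def condNum {k : Type*} [Fintype k] [DecidableEq k] (V : Matrix k k ℂ) : ℝ :=
  frobNorm V * frobNorm V⁻¹

noncomputable def vand (n : ℕ) (ζ : Fin n.totient → ℂ) :
    Matrix (Fin n.totient) (Fin n.totient) ℂ :=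
  fun i j => ζ i ^ (j : ℕ)

noncomputable def wMat (n : ℕ) (ζ : Fin n.totient → ℂ) :
    Matrix (Fin n.totient) (Fin (n.totient * n)) ℂ :=
  fun i j => ζ i ^ (j : ℕ)

noncomputable def compMat (n : ℕ) : Matrix (Fin n.totient) (Fin n.totient) ℂ :=
  fun i j =>
    if (i : ℕ) = (j : ℕ) + 1 then 1
    else if (j : ℕ) = n.totient - 1 then -((Polynomial.cyclotomic n ℂ).coeff i)
    else 0

noncomputable def sMat (n : ℕ) (hn : 0 < n) :
    Matrix (Fin n.totient) (Fin (n.totient * n)) ℂ :=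
  fun i j =>
    (compMat n ^ (((j : ℕ) / n.totient) * n.totient)) i
      ⟨(j : ℕ) % n.totient, Nat.mod_lt _ (Nat.totient_pos.mpr hn)⟩

noncomputable def Acoef (n : ℕ) : ℝ :=
  (((Finset.range n.totient).sup fun j => ((Polynomial.cyclotomic n ℤ).coeff j).natAbs : ℕ) : ℝ)


lemma trace_re_eq {α β : Type*} [Fintype α] [Fintype β] (A : Matrix α β ℂ) :
    (Aᴴ * A).trace.re = ∑ i, ∑ j, Complex.normSq (A i j) := by
  rw [Matrix.trace]
  simp only [Matrix.diag_apply, Matrix.mul_apply, Matrix.conjTranspose_apply, Complex.re_sum]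
  rw [Finset.sum_comm]
  refine Finset.sum_congr rfl fun i _ => Finset.sum_congr rfl fun j _ => ?_
  simp [Complex.mul_re, Complex.normSq_apply]

lemma frob_sq {α β : Type*} [Fintype α] [Fintype β] (A : Matrix α β ℂ) :
    frobNorm A ^ 2 = ∑ i, ∑ j, Complex.normSq (A i j) := by
  rw [frobNorm, Real.sq_sqrt, trace_re_eq]
  rw [trace_re_eq]
  exact Finset.sum_nonneg fun i _ => Finset.sum_nonneg fun j _ => Complex.normSq_nonneg _

lemma frob_sq' {α β : Type*} [Fintype α] [Fintype β] (A : Matrix α β ℂ) :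
    frobNorm A ^ 2 = (Aᴴ * A).trace.re := by
  rw [frobNorm, Real.sq_sqrt]
  rw [trace_re_eq]
  exact Finset.sum_nonneg fun i _ => Finset.sum_nonneg fun j _ => Complex.normSq_nonneg _

lemma compMat_row (n : ℕ) (hn : 0 < n) {z : ℂ} (hz : IsPrimitiveRoot z n) (r : Fin n.totient) :
    ∑ l : Fin n.totient, z ^ (l : ℕ) * compMat n l r = z ^ ((r : ℕ) + 1) := by
  have hm : 0 < n.totient := Nat.totient_pos.mpr hn
  rcases lt_or_eq_of_le (Nat.succ_le_of_lt r.isLt) with h | h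
  · rw [Finset.sum_eq_single (⟨(r : ℕ) + 1, h⟩ : Fin n.totient)]
    · simp [compMat]
    · intro l _ hl
      have : (l : ℕ) ≠ (r : ℕ) + 1 := by
        intro hc; apply hl; exact Fin.ext hc
      have hr : (r : ℕ) ≠ n.totient - 1 := by omega
      simp [compMat, this, hr]
    · intro hc; exact absurd (Finset.mem_univ _) hc
  · have hr : (r : ℕ) = n.totient - 1 := by omega
    have hcoeff : ∀ l : Fin n.totient, compMat n l r = -((cyclotomic n ℂ).coeff l) := by
      intro l
      have h1 : (l : ℕ) ≠ n.totient - 1 + 1 := by have := l.isLt; omega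
      have h2 : (l : ℕ) ≠ (r : ℕ) + 1 := by omega
      simp [compMat, h2, hr, h1]
    simp only [hcoeff]
    have heval : eval z (cyclotomic n ℂ) = 0 := (hz.isRoot_cyclotomic hn).eq_zero ▸ rfl
    have hdeg : (cyclotomic n ℂ).natDegree = n.totient := natDegree_cyclotomic n ℂ
    have hsum := Polynomial.eval_eq_sum_range (p := cyclotomic n ℂ) z
    rw [hdeg, Finset.sum_range_succ] at hsum
    have hlead : (cyclotomic n ℂ).coeff n.totient = 1 := by
      have := (cyclotomic.monic n ℂ).leadingCoeff
      rwa [leadingCoeff, hdeg] at this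
    rw [hlead, one_mul, heval] at hsum
    rw [Fin.sum_univ_eq_sum_range (fun l => z ^ l * -((cyclotomic n ℂ).coeff l))]
    have hre : ∑ l ∈ Finset.range n.totient, z ^ l * -((cyclotomic n ℂ).coeff l)
        = -(∑ x ∈ Finset.range n.totient, (cyclotomic n ℂ).coeff x * z ^ x) := by
      rw [← Finset.sum_neg_distrib]
      exact Finset.sum_congr rfl fun x _ => by ring
    rw [hre, show (r : ℕ) + 1 = n.totient by omega]
    linear_combination hsum

lemma compMat_pow_row (n : ℕ) (hn : 0 < n) {z : ℂ} (hz : IsPrimitiveRoot z n) (p : ℕ)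
    (r : Fin n.totient) :
    ∑ l : Fin n.totient, z ^ (l : ℕ) * (compMat n ^ p) l r = z ^ p * z ^ (r : ℕ) := by
  induction p generalizing r with
  | zero => simp [Matrix.one_apply]
  | succ p ih =>
    rw [pow_succ]
    simp only [Matrix.mul_apply]
    calc ∑ l : Fin n.totient, z ^ (l : ℕ) * ∑ k, (compMat n ^ p) l k * compMat n k r
        = ∑ k : Fin n.totient, (∑ l : Fin n.totient, z ^ (l : ℕ) * (compMat n ^ p) l k) *
            compMat n k r := by
          simp_rw [Finset.mul_sum, Finset.sum_mul]
          rw [Finset.sum_comm]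
          exact Finset.sum_congr rfl fun k _ => Finset.sum_congr rfl fun l _ => by ring
      _ = ∑ k : Fin n.totient, (z ^ p * z ^ (k : ℕ)) * compMat n k r := by simp_rw [ih]
      _ = z ^ p * ∑ k : Fin n.totient, z ^ (k : ℕ) * compMat n k r := by
          rw [Finset.mul_sum]; exact Finset.sum_congr rfl fun k _ => by ring
      _ = z ^ p * z ^ ((r : ℕ) + 1) := by rw [compMat_row n hn hz r]
      _ = z ^ (p + 1) * z ^ (r : ℕ) := by ring

lemma vand_mul_sMat (n : ℕ) (hn : 0 < n) (ζ : Fin n.totient → ℂ)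
    (hζ' : ∀ i, IsPrimitiveRoot (ζ i) n) :
    vand n ζ * sMat n hn = wMat n ζ := by
  ext i j
  simp only [Matrix.mul_apply, vand, sMat, wMat]
  rw [compMat_pow_row n hn (hζ' i), ← pow_add]
  congr 1
  exact Nat.div_add_mod' _ _

lemma wMat_mul_conjT (n : ℕ) (hn : 0 < n) (ζ : Fin n.totient → ℂ)
    (hζ : Function.Injective ζ) (hζ' : ∀ i, IsPrimitiveRoot (ζ i) n) :
    wMat n ζ * (wMat n ζ)ᴴ = ((n.totient * n : ℕ) : ℂ) • 1 := by
  ext i k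
  simp only [Matrix.mul_apply, Matrix.conjTranspose_apply, wMat, Matrix.smul_apply,
    Matrix.one_apply, smul_eq_mul]
  have hnorm : ‖ζ k‖ = 1 := Complex.norm_eq_one_of_pow_eq_one ((hζ' k).pow_eq_one) hn.ne'
  have hconj : star (ζ k) = (ζ k)⁻¹ := (Complex.inv_eq_conj hnorm).symm
  have hterm : ∀ j : Fin (n.totient * n),
      ζ i ^ (j : ℕ) * star (ζ k ^ (j : ℕ)) = (ζ i * (ζ k)⁻¹) ^ (j : ℕ) := by
    intro j
    rw [star_pow, hconj, mul_pow]
  simp only [hterm]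
  rw [Fin.sum_univ_eq_sum_range (fun j => (ζ i * (ζ k)⁻¹) ^ j)]
  rcases eq_or_ne i k with rfl | hik
  · have : ζ i * (ζ i)⁻¹ = 1 := mul_inv_cancel₀ ((hζ' i).ne_zero hn.ne')
    simp [this]
  · have hne : ζ i * (ζ k)⁻¹ ≠ 1 := by
      intro hc
      apply hik
      apply hζ
      have h0 : ζ k ≠ 0 := (hζ' k).ne_zero hn.ne'
      field_simp at hc
      exact hc
    rw [geom_sum_eq hne]
    have hpow : (ζ i * (ζ k)⁻¹) ^ (n.totient * n) = 1 := by
      rw [mul_comm n.totient n, pow_mul, mul_pow, (hζ' i).pow_eq_one, inv_pow,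
        (hζ' k).pow_eq_one, inv_one, one_mul, one_pow]
    rw [hpow]
    simp [hik]

lemma sum_reindex {M : Type*} [AddCommMonoid M] (m n : ℕ) (hm : 0 < m) (f : ℕ → ℕ → M) :
    ∑ j ∈ Finset.range (m * n), f (j / m) (j % m) =
      ∑ k ∈ Finset.range n, ∑ r ∈ Finset.range m, f k r := by
  rw [← Finset.sum_product']
  refine Finset.sum_nbij' (fun j => (j / m, j % m)) (fun p => p.1 * m + p.2) ?_ ?_ ?_ ?_ ?_
  · intro j hj
    simp only [Finset.mem_range] at hj
    simp only [Finset.mem_product, Finset.mem_range]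
    exact ⟨Nat.div_lt_of_lt_mul hj, Nat.mod_lt _ hm⟩
  · intro p hp
    simp only [Finset.mem_product, Finset.mem_range] at hp
    obtain ⟨h1, h2⟩ := hp
    simp only [Finset.mem_range]
    calc p.1 * m + p.2 < p.1 * m + m := by omega
      _ = (p.1 + 1) * m := by ring
      _ ≤ n * m := Nat.mul_le_mul_right m (by omega)
      _ = m * n := Nat.mul_comm _ _
  · intro j _
    exact Nat.div_add_mod' _ _
  · intro p hp
    simp only [Finset.mem_product, Finset.mem_range] at hp
    obtain ⟨h1, h2⟩ := hp
    have e1 : (p.1 * m + p.2) / m = p.1 := by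
      rw [mul_comm, Nat.mul_add_div hm, Nat.div_eq_of_lt h2, add_zero]
    have e2 : (p.1 * m + p.2) % m = p.2 := by
      rw [mul_comm, Nat.mul_add_mod, Nat.mod_eq_of_lt h2]
    exact Prod.ext e1 e2
  · intro j _
    rfl

theorem frobNorm_sq_vand_inv (n : ℕ) (hn : 0 < n) (ζ : Fin n.totient → ℂ)
    (hζ : Function.Injective ζ) (hζ' : ∀ i, IsPrimitiveRoot (ζ i) n) :
    frobNorm (vand n ζ)⁻¹ ^ 2 =
      1 / ((n.totient : ℝ) * n) *
        ∑ k ∈ Finset.range n, frobNorm (compMat n ^ (k * n.totient)) ^ 2 := by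
  have hm : 0 < n.totient := Nat.totient_pos.mpr hn
  set V := vand n ζ with hV
  set S := sMat n hn with hSdef
  set W := wMat n ζ with hW
  have hdet : IsUnit V.det := by
    have hVe : V = Matrix.vandermonde ζ := rfl
    rw [hVe, isUnit_iff_ne_zero]
    exact Matrix.det_vandermonde_ne_zero_iff.mpr hζ
  have hS : S = V⁻¹ * W := by
    rw [hW, ← vand_mul_sMat n hn ζ hζ', ← Matrix.mul_assoc, Matrix.nonsing_inv_mul _ hdet,
      Matrix.one_mul, hSdef]
  have hSS : S * Sᴴ = ((n.totient * n : ℕ) : ℂ) • (V⁻¹ * (V⁻¹)ᴴ) := by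
    rw [hS, Matrix.conjTranspose_mul]
    calc V⁻¹ * W * (Wᴴ * (V⁻¹)ᴴ) = V⁻¹ * ((W * Wᴴ) * (V⁻¹)ᴴ) := by
          rw [Matrix.mul_assoc, ← Matrix.mul_assoc W]
      _ = V⁻¹ * ((((n.totient * n : ℕ) : ℂ) • 1) * (V⁻¹)ᴴ) := by
          rw [hW, wMat_mul_conjT n hn ζ hζ hζ']
      _ = ((n.totient * n : ℕ) : ℂ) • (V⁻¹ * (V⁻¹)ᴴ) := by
          rw [Matrix.smul_mul, Matrix.one_mul, Matrix.mul_smul]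
  have htr : (Sᴴ * S).trace.re = ((n.totient * n : ℕ) : ℝ) * frobNorm V⁻¹ ^ 2 := by
    rw [Matrix.trace_mul_comm, hSS, Matrix.trace_smul, smul_eq_mul, Complex.mul_re,
      Complex.natCast_re, Complex.natCast_im, zero_mul, sub_zero]
    rw [frob_sq', Matrix.trace_mul_comm]
  set f : ℕ → ℕ → ℝ := fun k r =>
    ∑ i, Complex.normSq ((compMat n ^ (k * n.totient)) i
      ⟨r % n.totient, Nat.mod_lt _ hm⟩) with hf
  have key : ∑ k ∈ Finset.range n, frobNorm (compMat n ^ (k * n.totient)) ^ 2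
      = ((n.totient * n : ℕ) : ℝ) * frobNorm V⁻¹ ^ 2 := by
    rw [← htr, trace_re_eq]
    calc ∑ k ∈ Finset.range n, frobNorm (compMat n ^ (k * n.totient)) ^ 2
        = ∑ k ∈ Finset.range n, ∑ r ∈ Finset.range n.totient, f k r := by
          refine Finset.sum_congr rfl fun k _ => ?_
          rw [frob_sq, Finset.sum_comm, ← Fin.sum_univ_eq_sum_range (f k) n.totient]
          refine Finset.sum_congr rfl fun r _ => ?_
          simp only [hf]
          have he : (⟨(r : ℕ) % n.totient, Nat.mod_lt _ hm⟩ : Fin n.totient) = r :=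
            Fin.ext (Nat.mod_eq_of_lt r.isLt)
          rw [he]
      _ = ∑ j ∈ Finset.range (n.totient * n), f (j / n.totient) (j % n.totient) :=
          (sum_reindex n.totient n hm f).symm
      _ = ∑ j : Fin (n.totient * n), ∑ i, Complex.normSq (S i j) := by
          rw [← Fin.sum_univ_eq_sum_range
            (fun j => f (j / n.totient) (j % n.totient)) (n.totient * n)]
          refine Finset.sum_congr rfl fun j _ => ?_
          simp only [hf, hSdef, sMat]
          have he : (⟨(j : ℕ) % n.totient % n.totient, Nat.mod_lt _ hm⟩ : Fin n.totient)
              = ⟨(j : ℕ) % n.totient, Nat.mod_lt _ (Nat.totient_pos.mpr hn)⟩ :=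
            Fin.ext (Nat.mod_mod_of_dvd _ dvd_rfl)
          rw [he]
      _ = ∑ i, ∑ j, Complex.normSq (S i j) := Finset.sum_comm
  rw [key]
  have hmn : ((n.totient * n : ℕ) : ℝ) = (n.totient : ℝ) * n := by push_cast; ring
  rw [hmn]
  have hm0 : ((n.totient : ℝ)) ≠ 0 := by positivity
  have hn0 : ((n : ℝ)) ≠ 0 := by simpa using hn.ne'
  field_simp
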